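/- Let r ≥ 5 be an integer, r ∉ {6, 10}. Suppose x, y ∈ SO(3) are two non-commuting elements each of order 2r if r is odd, r/2 if r ≡ 2 (mod 4), and r if r ≡ 0 (mod 4). Then the subgroup of SO(3) generated by x and y is infinite. -/

import Mathlib

namespace SO3Proof

open Matrix Module
open scoped RealInnerProductSpace

noncomputable abbrev E3 : Type := EuclideanSpace ℝ (Fin 3)

noncomputable def mv (A : Matrix (Fin 3) (Fin 3) ℝ) : E3 →ₗ[ℝ] E3 := Matrix.toEuclideanLin A

lemma mv_mul (A B : Matrix (Fin 3) (Fin 3) ℝ) (v : E3) : mv (A * B) v = mv A (mv B v) := by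
  simp [mv, Matrix.toEuclideanLin_eq_toLin, Matrix.toLin_mul _ (PiLp.basisFun 2 ℝ (Fin 3)) _]

lemma mv_one (v : E3) : mv 1 v = v := by
  simp [mv, Matrix.toEuclideanLin_eq_toLin]

lemma mv_inner {A : Matrix (Fin 3) (Fin 3) ℝ} (hA : star A * A = 1) (u v : E3) :
    ⟪mv A u, mv A v⟫ = ⟪u, v⟫ := by
  have hadj : ⟪mv A u, mv A v⟫ = ⟪u, mv (star A) (mv A v)⟫ := by
    simp only [mv, Matrix.star_eq_conjTranspose,
      Matrix.toEuclideanLin_conjTranspose_eq_adjoint, LinearMap.adjoint_inner_right]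
  rw [hadj, ← mv_mul, hA, mv_one]

lemma mv_eq_of_basis {A B : Matrix (Fin 3) (Fin 3) ℝ} (b : OrthonormalBasis (Fin 3) ℝ E3)
    (h : ∀ i, mv A (b i) = mv B (b i)) : A = B := by
  have : mv A = mv B := b.toBasis.ext (by simpa using h)
  exact Matrix.toEuclideanLin.injective this

lemma expand (b : OrthonormalBasis (Fin 3) ℝ E3) (v : E3) :
    v = ⟪b 0, v⟫ • b 0 + ⟪b 1, v⟫ • b 1 + ⟪b 2, v⟫ • b 2 := by
  have := b.sum_repr' v
  rw [Fin.sum_univ_three] at this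
  exact this.symm

lemma exists_onb {u : E3} (hu : ⟪u, u⟫ = 1) :
    ∃ b : OrthonormalBasis (Fin 3) ℝ E3, b 0 = u := by
  have hnorm : ‖u‖ = 1 := by
    have := real_inner_self_eq_norm_sq u
    nlinarith [norm_nonneg u]
  have hcard : finrank ℝ E3 = Fintype.card (Fin 3) := by simp
  have horth : Orthonormal ℝ (Set.restrict {(0 : Fin 3)} ![u, u, u]) := by
    constructor
    · rintro ⟨i, hi⟩
      simp only [Set.mem_singleton_iff] at hi
      subst hi
      exact hnorm
    · rintro ⟨i, hi⟩ ⟨j, hj⟩ hij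
      simp only [Set.mem_singleton_iff] at hi hj
      exact absurd (Subtype.ext (hi.trans hj.symm)) hij
  obtain ⟨b, hb⟩ := horth.exists_orthonormalBasis_extension_of_card_eq hcard
  exact ⟨b, by simpa using hb 0 rfl⟩

lemma exists_fixed {A : Matrix (Fin 3) (Fin 3) ℝ} (hA : star A * A = 1) (hdet : A.det = 1) :
    ∃ u : E3, ⟪u, u⟫ = 1 ∧ mv A u = u := by
  have hdetA : (A - 1).det = 0 := by
    have h1 : star A * (A - 1) = 1 - star A := by
      rw [mul_sub, hA, mul_one]
    have hdets : (star A).det = A.det := by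
      rw [Matrix.star_eq_conjTranspose]
      simp [Matrix.det_transpose]
    have h2 : (A - 1).det = (1 - star A).det := by
      have := congrArg Matrix.det h1
      rwa [Matrix.det_mul, hdets, hdet, one_mul] at this
    have h3 : (1 - star A).det = (1 - A).det := by
      have : (1 : Matrix (Fin 3) (Fin 3) ℝ) - star A = star (1 - A) := by
        simp
      rw [this, Matrix.star_eq_conjTranspose]
      have h5 : (1 - A).conjTranspose = (1 - A).transpose := rfl
      rw [h5, Matrix.det_transpose]
    have h4 : (1 - A).det = - (A - 1).det := by
      have : (1 : Matrix (Fin 3) (Fin 3) ℝ) - A = (-1 : ℝ) • (A - 1) := by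
        simp [smul_sub]; abel
      rw [this, Matrix.det_smul]
      simp; ring
    have := h2.trans (h3.trans h4)
    linarith
  obtain ⟨v, hv0, hv⟩ := Matrix.exists_mulVec_eq_zero_iff.mpr hdetA
  have hAv : A *ᵥ v = v := by
    have := hv
    rw [Matrix.sub_mulVec, Matrix.one_mulVec, sub_eq_zero] at this
    exact this
  set w : E3 := (WithLp.equiv 2 (Fin 3 → ℝ)).symm v with hw
  have hmvw : mv A w = w := by
    rw [mv, hw, WithLp.equiv_symm_apply, Matrix.toEuclideanLin_apply_piLp_toLp, hAv]
  have hwne : w ≠ 0 := by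
    simpa [hw] using hv0
  have hpos : (0 : ℝ) < ⟪w, w⟫ := by
    rcases lt_or_eq_of_le (real_inner_self_nonneg (x := w)) with h | h
    · exact h
    · exact absurd (inner_self_eq_zero.mp h.symm) hwne
  refine ⟨(Real.sqrt ⟪w, w⟫)⁻¹ • w, ?_, ?_⟩
  · rw [real_inner_smul_left, real_inner_smul_right]
    rw [show (Real.sqrt ⟪w, w⟫)⁻¹ * ((Real.sqrt ⟪w, w⟫)⁻¹ * ⟪w, w⟫)
        = ⟪w, w⟫ / (Real.sqrt ⟪w, w⟫ * Real.sqrt ⟪w, w⟫) by ring,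
      Real.mul_self_sqrt hpos.le, div_self hpos.ne']
  · rw [LinearMap.map_smul, hmvw]


lemma onb_inner (b : OrthonormalBasis (Fin 3) ℝ E3) (i j : Fin 3) :
    ⟪b i, b j⟫ = if i = j then 1 else 0 :=
  orthonormal_iff_ite.mp b.orthonormal i j

/-- `A` fixes `b 0` and acts on the plane spanned by `b 1, b 2` as rotation by `a + c i`. -/
def IsRot (b : OrthonormalBasis (Fin 3) ℝ E3) (A : Matrix (Fin 3) (Fin 3) ℝ) (a c : ℝ) : Prop :=
  a ^ 2 + c ^ 2 = 1 ∧ mv A (b 0) = b 0 ∧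
    mv A (b 1) = a • b 1 + c • b 2 ∧ mv A (b 2) = (-c) • b 1 + a • b 2

lemma isRot_one (b : OrthonormalBasis (Fin 3) ℝ E3) : IsRot b 1 1 0 := by
  refine ⟨by norm_num, ?_, ?_, ?_⟩ <;> simp [mv_one]

lemma isRot_mul {b : OrthonormalBasis (Fin 3) ℝ E3} {A B : Matrix (Fin 3) (Fin 3) ℝ}
    {a c a' c' : ℝ} (hA : IsRot b A a c) (hB : IsRot b B a' c') :
    IsRot b (A * B) (a * a' - c * c') (a * c' + c * a') := by
  obtain ⟨r1, hA0, hA1, hA2⟩ := hA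
  obtain ⟨r1', hB0, hB1, hB2⟩ := hB
  refine ⟨by nlinarith, ?_, ?_, ?_⟩
  · rw [mv_mul, hB0, hA0]
  · rw [mv_mul, hB1, map_add, LinearMap.map_smul, LinearMap.map_smul, hA1, hA2]
    module
  · rw [mv_mul, hB2, map_add, LinearMap.map_smul, LinearMap.map_smul, hA1, hA2]
    module

lemma isRot_pow {b : OrthonormalBasis (Fin 3) ℝ E3} {A : Matrix (Fin 3) (Fin 3) ℝ}
    {a c : ℝ} (hA : IsRot b A a c) (m : ℕ) :
    IsRot b (A ^ m) (((a : ℂ) + c * Complex.I) ^ m).re (((a : ℂ) + c * Complex.I) ^ m).im := by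
  induction m with
  | zero => simpa using isRot_one b
  | succ m ih =>
      have h2 := isRot_mul ih hA
      rw [← pow_succ] at h2
      have hre : (((a : ℂ) + c * Complex.I) ^ (m + 1)).re
          = (((a : ℂ) + c * Complex.I) ^ m).re * a - (((a : ℂ) + c * Complex.I) ^ m).im * c := by
        rw [pow_succ, Complex.mul_re]
        simp
      have him : (((a : ℂ) + c * Complex.I) ^ (m + 1)).im
          = (((a : ℂ) + c * Complex.I) ^ m).re * c + (((a : ℂ) + c * Complex.I) ^ m).im * a := by
        rw [pow_succ, Complex.mul_im]
        simp
      rw [hre, him]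
      exact h2

lemma isRot_unique {b : OrthonormalBasis (Fin 3) ℝ E3} {A A' : Matrix (Fin 3) (Fin 3) ℝ}
    {a c : ℝ} (hA : IsRot b A a c) (hA' : IsRot b A' a c) : A = A' := by
  obtain ⟨_, hA0, hA1, hA2⟩ := hA
  obtain ⟨_, hA0', hA1', hA2'⟩ := hA'
  refine mv_eq_of_basis b ?_
  intro i
  fin_cases i <;> simp_all

lemma isRot_coeff {b : OrthonormalBasis (Fin 3) ℝ E3} {A A' : Matrix (Fin 3) (Fin 3) ℝ}
    {a c a' c' : ℝ} (hA : IsRot b A a c) (hA' : IsRot b A' a' c') (hAA : A = A') :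
    a = a' ∧ c = c' := by
  subst hAA
  have h1 := hA.2.2.1
  have h1' := hA'.2.2.1
  rw [h1'] at h1
  constructor
  · have h2 := congrArg (fun w => ⟪b 1, w⟫) h1
    simp only [inner_add_right, real_inner_smul_right, onb_inner, Fin.reduceEq, reduceIte,
      mul_one, mul_zero, add_zero, zero_add] at h2
    linarith
  · have h2 := congrArg (fun w => ⟪b 2, w⟫) h1
    simp only [inner_add_right, real_inner_smul_right, onb_inner, Fin.reduceEq, reduceIte,
      mul_one, mul_zero, add_zero, zero_add] at h2
    linarith

lemma isRot_pow_eq_one_iff {b : OrthonormalBasis (Fin 3) ℝ E3} {A : Matrix (Fin 3) (Fin 3) ℝ}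
    {a c : ℝ} (hA : IsRot b A a c) (m : ℕ) :
    A ^ m = 1 ↔ ((a : ℂ) + c * Complex.I) ^ m = 1 := by
  have hm := isRot_pow hA m
  constructor
  · intro h
    rw [h] at hm
    have := isRot_coeff hm (isRot_one b) rfl
    exact Complex.ext this.1 this.2
  · intro h
    rw [h] at hm
    simp only [Complex.one_re, Complex.one_im] at hm
    exact isRot_unique hm (isRot_one b)

lemma rot_or_sq_one {A : Matrix (Fin 3) (Fin 3) ℝ} (hA : star A * A = 1)
    (b : OrthonormalBasis (Fin 3) ℝ E3) (h0 : mv A (b 0) = b 0) :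
    (∃ a c, IsRot b A a c) ∨ A * A = 1 := by
  set a := ⟪b 1, mv A (b 1)⟫ with ha_def
  set c := ⟪b 2, mv A (b 1)⟫ with hc_def
  set a' := ⟪b 1, mv A (b 2)⟫ with ha'_def
  set d := ⟪b 2, mv A (b 2)⟫ with hd_def
  have hz1 : ⟪b 0, mv A (b 1)⟫ = 0 := by
    rw [← h0, mv_inner hA]
    simpa using onb_inner b 0 1
  have hz2 : ⟪b 0, mv A (b 2)⟫ = 0 := by
    rw [← h0, mv_inner hA]
    simpa using onb_inner b 0 2
  have h1 : mv A (b 1) = a • b 1 + c • b 2 := by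
    have := expand b (mv A (b 1))
    rw [hz1] at this
    simpa using this
  have h2 : mv A (b 2) = a' • b 1 + d • b 2 := by
    have := expand b (mv A (b 2))
    rw [hz2] at this
    simpa using this
  have r1 : a ^ 2 + c ^ 2 = 1 := by
    have h := mv_inner hA (b 1) (b 1)
    rw [h1] at h
    simp only [inner_add_left, inner_add_right, real_inner_smul_left, real_inner_smul_right,
      onb_inner, Fin.reduceEq, reduceIte, mul_one, mul_zero, add_zero, zero_add] at h
    linear_combination h
  have r2 : a' ^ 2 + d ^ 2 = 1 := by
    have h := mv_inner hA (b 2) (b 2)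
    rw [h2] at h
    simp only [inner_add_left, inner_add_right, real_inner_smul_left, real_inner_smul_right,
      onb_inner, Fin.reduceEq, reduceIte, mul_one, mul_zero, add_zero, zero_add] at h
    linear_combination h
  have r3 : a * a' + c * d = 0 := by
    have h := mv_inner hA (b 1) (b 2)
    rw [h1, h2] at h
    simp only [inner_add_left, inner_add_right, real_inner_smul_left, real_inner_smul_right,
      onb_inner, Fin.reduceEq, reduceIte, mul_one, mul_zero, add_zero, zero_add] at h
    linear_combination h
  have h4 : c ^ 2 + d ^ 2 = 1 := by
    linear_combination a' ^ 2 * r1 + (1 - c ^ 2) * r2 - (a * a' - c * d) * r3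
  have hda : (d - a) * (d + a) = 0 := by linear_combination h4 - r1
  have hac : (a' - c) * (a' + c) = 0 := by linear_combination r2 - h4
  have key : (a' = -c ∧ d = a) ∨ (a' = c ∧ d = -a) := by
    rcases mul_eq_zero.mp hda with h5 | h5 <;> rcases mul_eq_zero.mp hac with h6 | h6
    · -- d = a, a' = c : then 2ac = 0
      have hd : d = a := by linarith
      have ha' : a' = c := by linarith
      have h7 : a * c = 0 := by
        have : a * c + c * a = 0 := by rw [← ha', ← hd] at r3 ⊢; linarith [r3]
        linarith
      rcases mul_eq_zero.mp h7 with h8 | h8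
      · right; constructor <;> linarith
      · left; constructor <;> linarith
    · -- d = a, a' = -c
      left; constructor <;> linarith
    · -- d = -a, a' = c
      right; constructor <;> linarith
    · -- d = -a, a' = -c : then -2ac = 0
      have hd : d = -a := by linarith
      have ha' : a' = -c := by linarith
      have h7 : a * c = 0 := by
        linear_combination (-(1 : ℝ)/2) * r3 + (a/2) * h6 + (c/2) * h5
      rcases mul_eq_zero.mp h7 with h8 | h8
      · left; constructor <;> linarith
      · right; constructor <;> linarith
  rcases key with ⟨he1, he2⟩ | ⟨he1, he2⟩
  · left
    refine ⟨a, c, r1, h0, h1, ?_⟩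
    rw [h2, he1, he2]
  · right
    refine mv_eq_of_basis b ?_
    have hb1 : mv (A * A) (b 1) = b 1 := by
      rw [mv_mul, h1, map_add, LinearMap.map_smul, LinearMap.map_smul, h1, h2, he1, he2]
      have h9 : a • (a • b 1 + c • b 2) + c • (c • b 1 + -a • b 2)
          = (a ^ 2 + c ^ 2) • b 1 := by module
      rw [h9, r1, one_smul]
    have hb2 : mv (A * A) (b 2) = b 2 := by
      rw [mv_mul, h2, he1, he2, map_add, LinearMap.map_smul, LinearMap.map_smul, h1, h2, he1, he2]
      have h9 : c • (a • b 1 + c • b 2) + -a • (c • b 1 + -a • b 2)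
          = (a ^ 2 + c ^ 2) • b 2 := by module
      rw [h9, r1, one_smul]
    intro i
    fin_cases i
    · show mv (A * A) (b 0) = mv 1 (b 0)
      rw [mv_mul, h0, h0, mv_one]
    · show mv (A * A) (b 1) = mv 1 (b 1)
      rw [hb1, mv_one]
    · show mv (A * A) (b 2) = mv 1 (b 2)
      rw [hb2, mv_one]

lemma isRot_move {b : OrthonormalBasis (Fin 3) ℝ E3} {A : Matrix (Fin 3) (Fin 3) ℝ}
    {a c : ℝ} (hA : IsRot b A a c) (v : E3) :
    ⟪mv A v - v, mv A v - v⟫ = 2 * (1 - a) * (⟪v, v⟫ - ⟪b 0, v⟫ ^ 2) := by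
  obtain ⟨r1, h0, h1, h2⟩ := hA
  have hv := expand b v
  set t := ⟪b 0, v⟫
  set α := ⟪b 1, v⟫
  set β := ⟪b 2, v⟫
  have hAv : mv A v = t • b 0 + (a * α - c * β) • b 1 + (c * α + a * β) • b 2 := by
    conv_lhs => rw [hv]
    rw [map_add, map_add, LinearMap.map_smul, LinearMap.map_smul, LinearMap.map_smul, h0, h1, h2]
    module
  have hsub : mv A v - v = ((a - 1) * α - c * β) • b 1 + (c * α + (a - 1) * β) • b 2 := by
    rw [hAv]
    conv_lhs => rw [hv]
    module
  have hvv : ⟪v, v⟫ = t ^ 2 + α ^ 2 + β ^ 2 := by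
    conv_lhs => rw [hv]
    simp only [inner_add_left, inner_add_right, real_inner_smul_left, real_inner_smul_right,
      onb_inner, Fin.reduceEq, reduceIte, mul_one, mul_zero, add_zero, zero_add]
    ring
  rw [hsub, hvv]
  simp only [inner_add_left, inner_add_right, real_inner_smul_left, real_inner_smul_right,
    onb_inner, Fin.reduceEq, reduceIte, mul_one, mul_zero, add_zero, zero_add]
  linear_combination (α ^ 2 + β ^ 2) * r1

abbrev G3 := Matrix.orthogonalGroup (Fin 3) ℝ

lemma coe_pow_g (g : G3) (m : ℕ) : ((g ^ m : G3) : Matrix (Fin 3) (Fin 3) ℝ) = (g : Matrix (Fin 3) (Fin 3) ℝ) ^ m :=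
  SubmonoidClass.coe_pow g m

lemma pow_eq_one_iff_g (g : G3) (m : ℕ) :
    g ^ m = 1 ↔ ((g : Matrix (Fin 3) (Fin 3) ℝ)) ^ m = 1 := by
  rw [← coe_pow_g]
  constructor
  · intro h; rw [h]; rfl
  · intro h; exact Subtype.ext h

lemma sq_ne_one_of_order {n : ℕ} (hn : 7 ≤ n) (g : G3) (hord : orderOf g = n) :
    ¬ ((g : Matrix (Fin 3) (Fin 3) ℝ) * g = 1) := by
  intro hsq
  have h2 : g ^ 2 = 1 := (pow_eq_one_iff_g g 2).mpr (by rw [pow_two]; exact hsq)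
  have := Nat.le_of_dvd (by norm_num) (orderOf_dvd_of_pow_eq_one h2)
  omega

lemma exists_good_rot {n : ℕ} (hn : 7 ≤ n) (g : G3) (hord : orderOf g = n)
    (b : OrthonormalBasis (Fin 3) ℝ E3) (hb0 : mv (↑g) (b 0) = b 0) :
    ∃ (j : ℕ) (a c : ℝ), IsRot b (↑(g ^ j)) a c ∧ 1/2 < a ∧ a < 1 := by
  rcases rot_or_sq_one g.prop.1 b hb0 with ⟨a, c, hrot⟩ | hsq
  · set z : ℂ := (a : ℂ) + c * Complex.I with hz_def
    have hzn : z ^ n = 1 := by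
      rw [← isRot_pow_eq_one_iff hrot n, ← coe_pow_g]
      have : g ^ n = 1 := by rw [← hord]; exact pow_orderOf_eq_one g
      rw [this]; rfl
    have hzprim : IsPrimitiveRoot z n := by
      refine ⟨hzn, fun l hl => ?_⟩
      have : (g : Matrix (Fin 3) (Fin 3) ℝ) ^ l = 1 := (isRot_pow_eq_one_iff hrot l).mpr hl
      have : g ^ l = 1 := (pow_eq_one_iff_g g l).mpr this
      rw [← hord]
      exact orderOf_dvd_of_pow_eq_one this
    haveI : NeZero n := ⟨by omega⟩
    have hζprim : IsPrimitiveRoot (Complex.exp (2 * Real.pi * Complex.I / n)) n :=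
      Complex.isPrimitiveRoot_exp n (by omega)
    obtain ⟨j, hjlt, hjz⟩ := hzprim.eq_pow_of_pow_eq_one hζprim.pow_eq_one
    have hrotj := isRot_pow hrot j
    rw [← hz_def, hjz] at hrotj
    have hexp : Complex.exp (2 * Real.pi * Complex.I / n)
        = Complex.exp (((2 * Real.pi / n : ℝ) : ℂ) * Complex.I) := by
      congr 1
      push_cast
      ring
    have hre : (Complex.exp (2 * Real.pi * Complex.I / n)).re = Real.cos (2 * Real.pi / n) := by
      rw [hexp, Complex.exp_ofReal_mul_I_re]
    have hpi := Real.pi_pos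
    have hn0 : (0 : ℝ) < n := by positivity
    have harg1 : 0 < 2 * Real.pi / n := by positivity
    have harg2 : 2 * Real.pi / n < Real.pi / 3 := by
      rw [div_lt_div_iff₀ hn0 (by norm_num)]
      have hn7 : (7 : ℝ) ≤ (n : ℝ) := by exact_mod_cast hn
      nlinarith
    have hcos1 : Real.cos (2 * Real.pi / n) > 1/2 := by
      have := Real.cos_lt_cos_of_nonneg_of_le_pi (le_of_lt harg1) (by linarith) harg2
      rwa [Real.cos_pi_div_three] at this
    have hcos2 : Real.cos (2 * Real.pi / n) < 1 := by
      have := Real.cos_lt_cos_of_nonneg_of_le_pi (le_refl 0) (by linarith) harg1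
      rwa [Real.cos_zero] at this
    refine ⟨j, (Complex.exp (2 * Real.pi * Complex.I / n)).re,
      (Complex.exp (2 * Real.pi * Complex.I / n)).im, ?_, ?_, ?_⟩
    · rw [coe_pow_g]; exact hrotj
    · rw [hre]; exact hcos1
    · rw [hre]; exact hcos2
  · exact absurd hsq (sq_ne_one_of_order hn g hord)

lemma commute_of_common_axis {n : ℕ} (hn : 7 ≤ n) {g h : G3} (hgo : orderOf g = n)
    (hho : orderOf h = n) {u : E3} (hu : ⟪u, u⟫ = 1)
    (hgu : mv (↑g) u = u) (hhu : mv (↑h) u = u) : g * h = h * g := by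
  obtain ⟨b, hb0⟩ := exists_onb hu
  rcases rot_or_sq_one g.prop.1 b (by rw [hb0]; exact hgu) with ⟨a, c, hg⟩ | hsq
  · rcases rot_or_sq_one h.prop.1 b (by rw [hb0]; exact hhu) with ⟨a', c', hh⟩ | hsq
    · have h1 := isRot_mul hg hh
      have h2 := isRot_mul hh hg
      have e1 : a' * a - c' * c = a * a' - c * c' := by ring
      have e2 : a' * c + c' * a = a * c' + c * a' := by ring
      rw [e1, e2] at h2
      have hmat : (g : Matrix (Fin 3) (Fin 3) ℝ) * (h : Matrix (Fin 3) (Fin 3) ℝ)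
          = (h : Matrix (Fin 3) (Fin 3) ℝ) * (g : Matrix (Fin 3) (Fin 3) ℝ) := isRot_unique h1 h2
      exact Subtype.ext hmat
    · exact absurd hsq (sq_ne_one_of_order hn h hho)
  · exact absurd hsq (sq_ne_one_of_order hn g hgo)

lemma vec_eq_pm {u v : E3} (hu : ⟪u, u⟫ = 1) (hv : ⟪v, v⟫ = 1)
    (ht : ⟪u, v⟫ ^ 2 = 1) : v = u ∨ v = -u := by
  have hcomm : ⟪v, u⟫ = ⟪u, v⟫ := real_inner_comm u v
  have hsub : ⟪v - ⟪u, v⟫ • u, v - ⟪u, v⟫ • u⟫ = 0 := by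
    simp only [inner_sub_left, inner_sub_right, real_inner_smul_left, real_inner_smul_right]
    rw [hcomm, hu, hv]
    linarith [ht]
  have hveq : v - ⟪u, v⟫ • u = 0 := inner_self_eq_zero.mp hsub
  have h0 : (⟪u, v⟫ - 1) * (⟪u, v⟫ + 1) = 0 := by linear_combination ht
  rcases mul_eq_zero.mp h0 with h | h
  · left
    have h1 : ⟪u, v⟫ = 1 := by linarith
    rw [h1, one_smul, sub_eq_zero] at hveq
    exact hveq
  · right
    have h1 : ⟪u, v⟫ = -1 := by linarith
    rw [h1] at hveq
    have h2 : v = (-1 : ℝ) • u := by linear_combination (norm := module) hveq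
    rw [h2]
    module

lemma fix_subset {n : ℕ} (hn : 7 ≤ n) (g : G3) (hord : orderOf g = n)
    {u : E3} (hu : ⟪u, u⟫ = 1) (hgu : mv (↑g) u = u) :
    {v : E3 | ⟪v, v⟫ = 1 ∧ mv (↑g) v = v} ⊆ {u, -u} := by
  obtain ⟨b, hb0⟩ := exists_onb hu
  rcases rot_or_sq_one g.prop.1 b (by rw [hb0]; exact hgu) with ⟨a, c, hrot⟩ | hsq
  · have ha1 : a ≤ 1 := by nlinarith [hrot.1, sq_nonneg c]
    have hane : a ≠ 1 := by
      intro ha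
      have hc : c = 0 := by nlinarith [hrot.1]
      have : (↑g : Matrix (Fin 3) (Fin 3) ℝ) = 1 := by
        apply isRot_unique (a := a) (c := c) hrot
        rw [ha, hc]
        exact isRot_one b
      have hg1 : g = 1 := Subtype.ext this
      rw [hg1, orderOf_one] at hord
      omega
    have halt : a < 1 := lt_of_le_of_ne ha1 hane
    rintro v ⟨hv1, hgv⟩
    have hmove := isRot_move hrot v
    rw [hgv, sub_self] at hmove
    simp only [inner_zero_left] at hmove
    have ht2 : ⟪b 0, v⟫ ^ 2 = 1 := by
      have h2a : 0 < 1 - a := by linarith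
      have := hmove.symm
      rw [hv1] at this
      nlinarith [this]
    rw [hb0] at ht2
    exact vec_eq_pm hu hv1 ht2
  · exact absurd hsq (sq_ne_one_of_order hn g hord)

lemma inner_self_pos' {w : E3} (hw : w ≠ 0) : 0 < ⟪w, w⟫ := by
  rcases lt_or_eq_of_le (real_inner_self_nonneg (x := w)) with h | h
  · exact h
  · exact absurd (inner_self_eq_zero.mp h.symm) hw

end SO3Proof

open SO3Proof Matrix
open scoped RealInnerProductSpace

set_option maxHeartbeats 1000000 in
theorem so3_two_elements_infinite (r : ℕ) (hr : 5 ≤ r) (hr6 : r ≠ 6) (hr10 : r ≠ 10)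
    (x y : Matrix.orthogonalGroup (Fin 3) ℝ)
    (hdetx : (x : Matrix (Fin 3) (Fin 3) ℝ).det = 1)
    (hdety : (y : Matrix (Fin 3) (Fin 3) ℝ).det = 1)
    (hcomm : x * y ≠ y * x)
    (hx : orderOf x = if r % 2 = 1 then 2 * r else if r % 4 = 2 then r / 2 else r)
    (hy : orderOf y = if r % 2 = 1 then 2 * r else if r % 4 = 2 then r / 2 else r) :
    Infinite (Subgroup.closure {x, y}) := by
  set n : ℕ := if r % 2 = 1 then 2 * r else if r % 4 = 2 then r / 2 else r with hn_def
  have hn : 7 ≤ n := by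
    rw [hn_def]
    split_ifs with h1 h2 <;> omega
  by_contra hinf
  rw [not_infinite_iff_finite] at hinf
  set H : Subgroup G3 := Subgroup.closure {x, y} with hH_def
  have hHfin : ((H : Subgroup G3) : Set G3).Finite := by
    haveI := hinf
    exact Set.toFinite _
  obtain ⟨u, hu1, hxu⟩ := exists_fixed x.prop.1 hdetx
  obtain ⟨v₀, hv01, hyv⟩ := exists_fixed y.prop.1 hdety
  have hxH : x ∈ H := Subgroup.subset_closure (by simp)
  have hyH : y ∈ H := Subgroup.subset_closure (by simp)
  set S : Set E3 := {v | ⟪v, v⟫ = 1 ∧ ∃ g : G3, g ∈ H ∧ orderOf g = n ∧ mv (↑g) v = v}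
    with hS_def
  have huS : u ∈ S := ⟨hu1, x, hxH, hx, hxu⟩
  have hv0S : v₀ ∈ S := ⟨hv01, y, hyH, hy, hyv⟩
  have hSfin : S.Finite := by
    have hsub : S ⊆ ⋃ g ∈ ((H : Subgroup G3) : Set G3),
        {v : E3 | ⟪v, v⟫ = 1 ∧ orderOf g = n ∧ mv (↑g) v = v} := by
      rintro v ⟨hv1, g, hgH, hgo, hgv⟩
      exact Set.mem_biUnion hgH ⟨hv1, hgo, hgv⟩
    refine Set.Finite.subset (Set.Finite.biUnion hHfin fun g _ => ?_) hsub
    by_cases hgo : orderOf g = n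
    · rcases Set.eq_empty_or_nonempty
        {v : E3 | ⟪v, v⟫ = 1 ∧ orderOf g = n ∧ mv (↑g) v = v} with he | ⟨w, hw1, _, hwfix⟩
      · rw [he]; exact Set.finite_empty
      · refine Set.Finite.subset ((Set.finite_singleton (-w)).insert w) ?_
        intro v hv
        exact fix_subset hn g hgo hw1 hwfix ⟨hv.1, hv.2.2⟩
    · have he : {v : E3 | ⟪v, v⟫ = 1 ∧ orderOf g = n ∧ mv (↑g) v = v} = ∅ := by
        ext v
        simp [hgo]
      rw [he]
      exact Set.finite_empty
  have hyu : mv (↑y) u = u → False := by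
    intro hyu
    exact hcomm (commute_of_common_axis hn hx hy hu1 hxu hyu)
  have hne1 : v₀ ≠ u := by
    rintro rfl
    exact hyu hyv
  have hne2 : v₀ ≠ -u := by
    rintro rfl
    apply hyu
    have h2 : mv (↑y) (-(-u)) = -(-u) := by
      rw [map_neg, hyv]
    simpa using h2
  set D : Set (E3 × E3) := {pr | pr.1 ∈ S ∧ pr.2 ∈ S ∧ pr.2 ≠ pr.1 ∧ pr.2 ≠ -pr.1} with hD_def
  have hDfin : D.Finite := by
    refine Set.Finite.subset (hSfin.prod hSfin) ?_
    rintro ⟨pp, qq⟩ h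
    exact ⟨h.1, h.2.1⟩
  have hDne : D.Nonempty := ⟨(u, v₀), huS, hv0S, hne1, hne2⟩
  obtain ⟨⟨p, q⟩, hpqD, hmin⟩ :=
    Set.Finite.exists_minimalFor (fun pr : E3 × E3 => ⟪pr.1 - pr.2, pr.1 - pr.2⟫) D hDfin hDne
  obtain ⟨hpS, hqS, hqp, hqnp⟩ := hpqD
  have hq1 : ⟪q, q⟫ = 1 := hqS.1
  obtain ⟨hp1, gp, hgpH, hgpo, hgpfix⟩ := hpS
  obtain ⟨b, hb0⟩ := exists_onb hp1
  obtain ⟨j, a, c, hrot, ha2, ha1⟩ := exists_good_rot hn gp hgpo b (by rw [hb0]; exact hgpfix)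
  set B : G3 := gp ^ j with hB_def
  have hBH : B ∈ H := Subgroup.pow_mem H hgpH j
  clear_value B
  have hBstar : star (B : Matrix (Fin 3) (Fin 3) ℝ) * (B : Matrix (Fin 3) (Fin 3) ℝ) = 1 := B.prop.1
  set q' : E3 := mv (↑B) q with hq'_def
  clear_value q'
  have hq'1 : ⟪q', q'⟫ = 1 := by rw [hq'_def, mv_inner hBstar, hq1]
  have htpq : ⟪b 0, q⟫ = ⟪p, q⟫ := by rw [hb0]
  have hFpq : ⟪p - q, p - q⟫ = 2 - 2 * ⟪p, q⟫ := by
    simp only [inner_sub_left, inner_sub_right]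
    rw [← real_inner_comm q p, hp1, hq1]
    ring
  have hFpq_pos : 0 < ⟪p - q, p - q⟫ := by
    apply inner_self_pos'
    rw [sub_ne_zero]
    exact fun h => hqp h.symm
  have ht1 : ⟪p, q⟫ < 1 := by
    have h5 := hFpq_pos
    rw [hFpq] at h5
    linarith
  have hFpq2 : ⟪p + q, p + q⟫ = 2 + 2 * ⟪p, q⟫ := by
    simp only [inner_add_left, inner_add_right]
    rw [← real_inner_comm q p, hp1, hq1]
    ring
  have hFpq2_pos : 0 < ⟪p + q, p + q⟫ := by
    apply inner_self_pos'
    intro h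
    apply hqnp
    have : q = -p := by linear_combination (norm := module) h
    exact this
  have ht2 : -1 < ⟪p, q⟫ := by
    rw [hFpq2] at hFpq2_pos
    linarith
  have ht3 : ⟪p, q⟫ ^ 2 < 1 := by nlinarith
  have hmv : ⟪q' - q, q' - q⟫ = 2 * (1 - a) * (1 - ⟪p, q⟫ ^ 2) := by
    have h7 := isRot_move hrot q
    rw [hq1, htpq, ← hq'_def] at h7
    exact h7
  have hq'pos : 0 < ⟪q' - q, q' - q⟫ := by
    rw [hmv]
    have h8 : 0 < 1 - a := by linarith
    have h9 : 0 < 1 - ⟪p, q⟫ ^ 2 := by linarith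
    positivity
  have hq'ne : q' ≠ q := by
    intro h
    rw [h, sub_self] at hq'pos
    simp at hq'pos
  have hq'nq : q' ≠ -q := by
    intro h
    have h4 : ⟪q' - q, q' - q⟫ = 4 := by
      rw [h]
      have h5 : ((-q : E3) - q) = (-2 : ℝ) • q := by module
      rw [h5, real_inner_smul_left, real_inner_smul_right, hq1]
      norm_num
    rw [hmv] at h4
    have hs0 : (0 : ℝ) ≤ ⟪p, q⟫ ^ 2 := sq_nonneg _
    have hA : 1 - ⟪p, q⟫ ^ 2 ≤ 1 := by linarith
    have hC : (1 - a) * (1 - ⟪p, q⟫ ^ 2) ≤ (1 - a) * 1 :=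
      mul_le_mul_of_nonneg_left hA (by linarith)
    ring_nf at h4 hC
    linarith
  obtain ⟨_, gq, hgqH, hgqo, hgqfix⟩ := hqS
  set g' : G3 := B * gq * B⁻¹ with hg'_def
  have hg'H : g' ∈ H := by rw [hg'_def]; exact H.mul_mem (H.mul_mem hBH hgqH) (H.inv_mem hBH)
  clear_value g'
  have hg'o : orderOf g' = n := by
    have h5 : orderOf (B * gq * B⁻¹) = orderOf gq := by
      have h6 := orderOf_injective (MulAut.conj B).toMonoidHom (MulAut.conj B).injective gq
      simpa [MulAut.conj_apply] using h6
    rw [hg'_def, h5, hgqo]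
  have hg'fix : mv (↑g') q' = q' := by
    have hinv : mv (↑(B⁻¹ : G3)) q' = q := by
      rw [hq'_def, ← mv_mul]
      have h6 : ((B⁻¹ : G3) : Matrix (Fin 3) (Fin 3) ℝ) * ((B : G3) : Matrix (Fin 3) (Fin 3) ℝ)
          = 1 := by
        rw [← MulMemClass.coe_mul, inv_mul_cancel]
        rfl
      rw [h6, mv_one]
    have hcoe : ((g' : G3) : Matrix (Fin 3) (Fin 3) ℝ)
        = (B : Matrix (Fin 3) (Fin 3) ℝ) * ((gq : G3) : Matrix (Fin 3) (Fin 3) ℝ)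
          * ((B⁻¹ : G3) : Matrix (Fin 3) (Fin 3) ℝ) := by rw [hg'_def]; rfl
    rw [hcoe, mv_mul, mv_mul, hinv, hgqfix]
    exact hq'_def.symm
  have hq'S : q' ∈ S := ⟨hq'1, g', hg'H, hg'o, hg'fix⟩
  have hD' : (q, q') ∈ D := ⟨⟨hq1, gq, hgqH, hgqo, hgqfix⟩, hq'S, hq'ne, hq'nq⟩
  have hflip : ⟪q - q', q - q'⟫ = ⟪q' - q, q' - q⟫ := by
    have h5 : (q - q' : E3) = -(q' - q) := by module
    rw [h5, inner_neg_neg]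
  have hlt : ⟪q - q', q - q'⟫ < ⟪p - q, p - q⟫ := by
    rw [hflip, hmv, hFpq]
    nlinarith [ht1, ht2, ha1, ha2, mul_pos (show (0:ℝ) < 1 - ⟪p, q⟫ by linarith)
      (show (0:ℝ) < a - 1/2 + (a - 1/2) * ⟪p, q⟫ by nlinarith)]
  have hcontra := hmin hD' (le_of_lt hlt)
  simp only at hcontra
  linarith
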